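/- arXiv:1402.6420 — 6 statements merged into one kernel-verified Lean document; each statement's English description precedes it below -/
import Mathlib

section
/- In the algebra A with relation a·b − b·a = b², for any complex numbers μ and λ, and any homogeneous R of degree k−1 satisfying b·R·(a − λ·b) = (a − (λ+k−1)·b)·R·b, the element Q = (a − μ·b)·R satisfies b·Q·(a − λ·b) = (a − (λ+k)·b)·Q·b. -/
/-- The ℂ-span of the products of words of length `k` in the letters `a` (true)
and `b` (false): the homogeneous elements of degree `k`. -/
def wordSpan {A : Type*} [Ring A] [Algebra ℂ A] (a b : A) (k : ℕ) : Submodule ℂ A :=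
  Submodule.span ℂ
    {x | ∃ l : List Bool, l.length = k ∧ (l.map fun i => if i then a else b).prod = x}

/-- Inductive step (second case): in the algebra with relation `a·b − b·a = b²`,
if `R` is homogeneous of degree `k−1` and satisfies
`b·R·(a − λ·b) = (a − (λ+k−1)·b)·R·b`, then `Q = (a − μ·b)·R` satisfies
`b·Q·(a − λ·b) = (a − (λ+k)·b)·Q·b`. -/
theorem conj_shift_step_linear (A : Type*) [Ring A] [Algebra ℂ A] (a b : A)
    (hrel : a * b - b * a = b * b) (k : ℕ) (hk : 1 ≤ k)
    (mu lam : ℂ) (R : A) (hR : R ∈ wordSpan a b (k - 1))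
    (hRconj : b * R * (a - lam • b) = (a - (lam + (k : ℂ) - 1) • b) * R * b) :
    b * ((a - mu • b) * R) * (a - lam • b)
      = (a - (lam + (k : ℂ)) • b) * ((a - mu • b) * R) * b := by
  have hba : b * a = a * b - b * b := by rw [← hrel]; noncomm_ring
  have h1 : b * (a - mu • b) = (a - (mu + 1) • b) * b := by
    simp only [mul_sub, sub_mul, mul_smul_comm, smul_mul_assoc, hba]
    module
  have h2 : (a - (mu + 1) • b) * (a - (lam + (k : ℂ) - 1) • b)
      = (a - (lam + (k : ℂ)) • b) * (a - mu • b) := by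
    simp only [mul_sub, sub_mul, mul_smul_comm, smul_mul_assoc, smul_smul, hba]
    module
  calc b * ((a - mu • b) * R) * (a - lam • b)
      = (b * (a - mu • b)) * (R * (a - lam • b)) := by
        rw [← mul_assoc, mul_assoc _ R]
    _ = ((a - (mu + 1) • b) * b) * (R * (a - lam • b)) := by rw [h1]
    _ = (a - (mu + 1) • b) * (b * R * (a - lam • b)) := by
        rw [mul_assoc, mul_assoc b]
    _ = (a - (mu + 1) • b) * ((a - (lam + (k : ℂ) - 1) • b) * R * b) := by rw [hRconj]
    _ = ((a - (mu + 1) • b) * (a - (lam + (k : ℂ) - 1) • b)) * (R * b) := by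
        rw [mul_assoc, mul_assoc]
    _ = ((a - (lam + (k : ℂ)) • b) * (a - mu • b)) * (R * b) := by rw [h2]
    _ = (a - (lam + (k : ℂ)) • b) * ((a - mu • b) * R) * b := by
        rw [mul_assoc, mul_assoc, mul_assoc]
end

section
/- In the algebra A with relation a·b − b·a = b², for any complex number λ and any homogeneous R of degree k−1 satisfying b·R·(a − λ·b) = (a − (λ+k−1)·b)·R·b, the element Q = b·R satisfies b·Q·(a − λ·b) = (a − (λ+k)·b)·Q·b. -/
/-- Inductive step (first case): in the algebra with relation `a·b − b·a = b²`,
if `R` is homogeneous of degree `k−1` and satisfies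
`b·R·(a − λ·b) = (a − (λ+k−1)·b)·R·b`, then `Q = b·R` satisfies
`b·Q·(a − λ·b) = (a − (λ+k)·b)·Q·b`. -/
theorem conj_shift_step_b (A : Type*) [Ring A] [Algebra ℂ A] (a b : A)
    (hrel : a * b - b * a = b * b) (k : ℕ) (hk : 1 ≤ k)
    (lam : ℂ) (R : A) (hR : R ∈ wordSpan a b (k - 1))
    (hRconj : b * R * (a - lam • b) = (a - (lam + (k : ℂ) - 1) • b) * R * b) :
    b * (b * R) * (a - lam • b) = (a - (lam + (k : ℂ)) • b) * (b * R) * b := by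
  have hba : b * a = a * b - b * b := by rw [← hrel]; abel
  rw [mul_assoc, hRconj]
  simp only [sub_mul, mul_sub, smul_mul_assoc, mul_smul_comm, hba, ← mul_assoc]
  rw [sub_smul, add_smul]
  simp only [sub_mul, smul_mul_assoc, one_smul, add_mul]
  abel
end

section
/- With notations as above, if det(M′) ≠ 0 and Σ_{j=1}^{n+1} p_j ≠ r, then the (n+2,1) entry of M̃⁻¹ equals σ = r/(r − Σ_{j=1}^{n+1} p_j). -/
/-- With `M̃` the `(n+2)×(n+2)` matrix with first row all `1` and `j`-th column
below the first row equal to `α j ∈ ℚ^{n+1}`, if `r·α_{n+2} = Σ_{j=1}^{n+1} p_j·α_j`,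
`det M′ ≠ 0` and `Σ p_j ≠ r`, then the `(n+2,1)` entry of `M̃⁻¹` is
`σ = r/(r − Σ p_j)`. -/
theorem inv_entry_sigma (n : ℕ) (α : Fin (n + 2) → Fin (n + 1) → ℚ)
    (p : Fin (n + 1) → ℤ) (r : ℕ) (hr : 0 < r)
    (hrel : (r : ℚ) • α (Fin.last (n + 1)) = ∑ j : Fin (n + 1), (p j : ℚ) • α j.castSucc)
    (hdet : (Matrix.of fun i j : Fin (n + 1) => α j.castSucc i).det ≠ 0)
    (hsum : (∑ j : Fin (n + 1), p j) ≠ (r : ℤ)) :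
    (Matrix.of fun i j : Fin (n + 2) => Fin.cases (1 : ℚ) (fun i' => α j i') i)⁻¹
        (Fin.last (n + 1)) 0
      = (r : ℚ) / ((r : ℚ) - ∑ j : Fin (n + 1), (p j : ℚ)) := by
  set S : ℚ := ∑ j : Fin (n + 1), (p j : ℚ) with hSdef
  have hrQ : (r : ℚ) ≠ 0 := Nat.cast_ne_zero.mpr hr.ne'
  have hSr : (r : ℚ) - S ≠ 0 := by
    intro h
    apply hsum
    have h2 : (S : ℚ) = (r : ℚ) := by linarith [sub_eq_zero.mp h]
    have : ((∑ j : Fin (n + 1), p j : ℤ) : ℚ) = ((r : ℤ) : ℚ) := by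
      push_cast
      simpa [hSdef] using h2
    exact_mod_cast this
  set σ : ℚ := (r : ℚ) / ((r : ℚ) - S) with hσdef
  set M : Matrix (Fin (n + 2)) (Fin (n + 2)) ℚ :=
    Matrix.of fun i j : Fin (n + 2) => Fin.cases (1 : ℚ) (fun i' => α j i') i with hMdef
  have hrel' : ∀ i, (r : ℚ) * α (Fin.last (n + 1)) i
      = ∑ j : Fin (n + 1), (p j : ℚ) * α j.castSucc i := by
    intro i
    have := congrFun hrel i
    simpa [Finset.sum_apply] using this
  set x : Fin (n + 2) → ℚ :=
    Fin.lastCases σ (fun j => -(σ / r) * p j) with hxdef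
  have hxlast : x (Fin.last (n + 1)) = σ := by simp [hxdef]
  have hxcast : ∀ j : Fin (n + 1), x j.castSucc = -(σ / r) * p j := by
    intro j; simp [hxdef]
  -- M *ᵥ x = e₀
  have hmul : M.mulVec x = Pi.single 0 1 := by
    funext i
    induction i using Fin.cases with
    | zero =>
      have : M.mulVec x 0 = ∑ j : Fin (n + 2), x j := by
        simp [Matrix.mulVec, dotProduct, hMdef]
      rw [this, Fin.sum_univ_castSucc]
      simp only [hxcast, hxlast]
      rw [← Finset.mul_sum, ← hSdef]
      have : -(σ / r) * S + σ = 1 := by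
        rw [hσdef]; field_simp; ring
      simpa [Pi.single_apply] using this
    | succ i =>
      have hrow : M.mulVec x i.succ = ∑ j : Fin (n + 2), α j i * x j := by
        simp [Matrix.mulVec, dotProduct, hMdef, mul_comm]
      rw [hrow, Fin.sum_univ_castSucc]
      simp only [hxcast, hxlast]
      have : ∑ j : Fin (n + 1), α j.castSucc i * (-(σ / r) * p j)
          = -(σ / r) * ((r : ℚ) * α (Fin.last (n + 1)) i) := by
        rw [hrel' i, Finset.mul_sum]
        exact Finset.sum_congr rfl fun j _ => by ring
      rw [this]
      have hne : (i.succ : Fin (n + 2)) ≠ 0 := Fin.succ_ne_zero i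
      rw [Pi.single_apply, if_neg hne]
      field_simp
      ring
  -- det M ≠ 0
  have hdetM : M.det ≠ 0 := by
    intro h0
    obtain ⟨v, hv, hMv⟩ := (Matrix.exists_mulVec_eq_zero_iff).mpr h0
    have hrow0 : ∑ j : Fin (n + 2), v j = 0 := by
      have := congrFun hMv 0
      simpa [Matrix.mulVec, dotProduct, hMdef] using this
    have hrows : ∀ i : Fin (n + 1), ∑ j : Fin (n + 2), α j i * v j = 0 := by
      intro i
      have := congrFun hMv i.succ
      simpa [Matrix.mulVec, dotProduct, hMdef, mul_comm] using this
    set w : Fin (n + 1) → ℚ :=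
      fun j => v (Fin.last (n + 1)) * p j + (r : ℚ) * v j.castSucc with hwdef
    have hw0 : (Matrix.of fun i j : Fin (n + 1) => α j.castSucc i).mulVec w = 0 := by
      funext i
      have hsplit : ∑ j : Fin (n + 1), α j.castSucc i * v j.castSucc
          = -(α (Fin.last (n + 1)) i * v (Fin.last (n + 1))) := by
        have := hrows i
        rw [Fin.sum_univ_castSucc] at this
        linarith
      have : (Matrix.of fun i j : Fin (n + 1) => α j.castSucc i).mulVec w i
          = v (Fin.last (n + 1)) * (∑ j : Fin (n + 1), (p j : ℚ) * α j.castSucc i)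
            + (r : ℚ) * ∑ j : Fin (n + 1), α j.castSucc i * v j.castSucc := by
        simp only [Matrix.mulVec, dotProduct, Matrix.of_apply, hwdef]
        rw [Finset.mul_sum, Finset.mul_sum, ← Finset.sum_add_distrib]
        exact Finset.sum_congr rfl fun j _ => by ring
      rw [this, ← hrel' i, hsplit]
      simp only [Pi.zero_apply]
      ring
    have hwz : w = 0 := Matrix.eq_zero_of_mulVec_eq_zero hdet hw0
    have hvcast : ∀ j : Fin (n + 1),
        v j.castSucc = -(v (Fin.last (n + 1)) / r) * p j := by
      intro j
      have := congrFun hwz j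
      simp only [hwdef, Pi.zero_apply] at this
      field_simp
      ring_nf
      linarith
    have hvlast : v (Fin.last (n + 1)) = 0 := by
      have h1 := hrow0
      rw [Fin.sum_univ_castSucc] at h1
      simp only [hvcast] at h1
      rw [← Finset.mul_sum, ← hSdef] at h1
      have h2 : v (Fin.last (n + 1)) * (1 - S / r) = 0 := by
        field_simp at h1 ⊢
        linarith
      have h3 : (1 : ℚ) - S / r ≠ 0 := by
        intro h4
        apply hSr
        field_simp at h4
        linarith
      exact (mul_eq_zero.mp h2).resolve_right h3
    apply hv
    funext j
    induction j using Fin.lastCases with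
    | last => simpa using hvlast
    | cast j => simp [hvcast j, hvlast]
  -- conclude
  have hinv : M⁻¹.mulVec (Pi.single 0 1) = x := by
    rw [← hmul, Matrix.mulVec_mulVec, Matrix.nonsing_inv_mul M (Ne.isUnit hdetM), Matrix.one_mulVec]
  have := congrFun hinv (Fin.last (n + 1))
  rw [hxlast] at this
  rw [← this]
  simp [Matrix.mulVec, dotProduct, Pi.single_apply]
end

section
/- Let R = ℂ[x₀,…,x_n][λ] and f ∈ R. On the quotient E_f = Ω^{n+1}_{/} / (d_{/}f ∧ d_{/}Ω^{n−1}_{/}) of relative top forms, the operator ∇ defined on classes of exact forms by ∇([d_{/}ξ]) = [d_{/}f ∧ ∂ξ/∂λ − (∂f/∂λ)·d_{/}ξ] is well defined: if ξ = d_{/}η then ∇([d_{/}ξ]) = 0 in E_f. -/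
noncomputable section
open MvPolynomial

/-- `R = ℂ[x₀,…,x_n][λ]`, realized as polynomials in `n+2` variables where the
variables `Fin.castSucc i` are the `xᵢ` and the last variable is `λ`. -/
abbrev PolyR (n : ℕ) : Type := MvPolynomial (Fin (n + 2)) ℂ

/-- `∂/∂λ` (derivative in the last variable). -/
def dLam {n : ℕ} (g : PolyR n) : PolyR n := pderiv (Fin.last (n + 1)) g

/-- The relative differential `d_{/}` from `n`-forms to top forms: an `n`-form
`ξ = Σᵢ ξᵢ dx₀∧…∧(omit i)…∧dx_n` is encoded by its coefficients `ξ : Fin (n+1) → R`,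
and `d_{/}ξ = (Σᵢ (−1)ⁱ ∂ξᵢ/∂xᵢ)·dx₀∧…∧dx_n`. -/
def dRel {n : ℕ} (ξ : Fin (n + 1) → PolyR n) : PolyR n :=
  ∑ i : Fin (n + 1), (-1 : PolyR n) ^ (i : ℕ) * pderiv i.castSucc (ξ i)

/-- Wedge with `d_{/}f` from `n`-forms to top forms:
`d_{/}f ∧ ξ = (Σᵢ (−1)ⁱ (∂f/∂xᵢ)·ξᵢ)·dx₀∧…∧dx_n`. -/
def wedgeDf {n : ℕ} (f : PolyR n) (ξ : Fin (n + 1) → PolyR n) : PolyR n :=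
  ∑ i : Fin (n + 1), (-1 : PolyR n) ^ (i : ℕ) * pderiv i.castSucc f * ξ i

/-- The relative differential `d_{/}` from `(n−1)`-forms to `n`-forms: an
`(n−1)`-form `η = Σ_{i<j} η_{ij} dx₀∧…∧(omit i,j)…∧dx_n` is encoded by
`η : Fin (n+1) → Fin (n+1) → R` (only the entries with `i < j` are used), and
the coefficient of `dx₀∧…∧(omit k)…∧dx_n` in `d_{/}η` is
`Σ_{i<k} (−1)ⁱ ∂η_{ik}/∂xᵢ + Σ_{j>k} (−1)^{j−1} ∂η_{kj}/∂xⱼ`. -/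
def dRelLow {n : ℕ} (η : Fin (n + 1) → Fin (n + 1) → PolyR n) :
    Fin (n + 1) → PolyR n := fun k =>
  (∑ i ∈ Finset.univ.filter (· < k), (-1 : PolyR n) ^ (i : ℕ) * pderiv i.castSucc (η i k))
    + ∑ j ∈ Finset.univ.filter (k < ·), (-1 : PolyR n) ^ ((j : ℕ) - 1) * pderiv j.castSucc (η k j)

/-- The submodule `d_{/}f ∧ d_{/}Ω^{n−1}_{/}` of top forms. -/
def dfWedgeDOmega {n : ℕ} (f : PolyR n) : Submodule ℂ (PolyR n) :=
  Submodule.span ℂ {x | ∃ η : Fin (n + 1) → Fin (n + 1) → PolyR n, x = wedgeDf f (dRelLow η)}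

/-- The quotient `E_f = Ω^{n+1}_{/}/(d_{/}f ∧ d_{/}Ω^{n−1}_{/})`. -/
abbrev Ef {n : ℕ} (f : PolyR n) : Type := PolyR n ⧸ dfWedgeDOmega f

/-- The representative of `∇([d_{/}ξ]) = [d_{/}f ∧ ∂ξ/∂λ − (∂f/∂λ)·d_{/}ξ]`. -/
def nablaRep {n : ℕ} (f : PolyR n) (ξ : Fin (n + 1) → PolyR n) : PolyR n :=
  wedgeDf f (fun i => dLam (ξ i)) - dLam f * dRel ξ

lemma pderiv_comm' {σ R : Type*} [CommRing R] (i j : σ) (p : MvPolynomial σ R) :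
    pderiv i (pderiv j p) = pderiv j (pderiv i p) := by
  classical
  induction p using MvPolynomial.induction_on' with
  | add p q hp hq => simp [hp, hq]
  | monomial s a =>
    rcases eq_or_ne i j with rfl | h
    · rfl
    · simp only [pderiv_monomial]
      rw [Finsupp.tsub_apply, Finsupp.tsub_apply,
        Finsupp.single_eq_of_ne h, Finsupp.single_eq_of_ne (Ne.symm h)]
      rw [tsub_right_comm]
      congr 1
      simp only [Nat.sub_zero]
      ring

lemma pderiv_neg_one_pow_mul {n : ℕ} (i : Fin (n+2)) (m : ℕ) (g : PolyR n) :
    pderiv i ((-1 : PolyR n) ^ m * g) = (-1 : PolyR n) ^ m * pderiv i g := by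
  have : ((-1 : PolyR n) ^ m) = C ((-1 : ℂ) ^ m) := by
    simp [map_pow]
  rw [this, pderiv_C_mul]

/-- `dLam` commutes with `dRelLow`. -/
lemma dLam_dRelLow {n : ℕ} (η : Fin (n + 1) → Fin (n + 1) → PolyR n) (k : Fin (n+1)) :
    dLam (dRelLow η k) = dRelLow (fun i j => dLam (η i j)) k := by
  unfold dRelLow dLam
  rw [map_add, map_sum, map_sum]
  congr 1 <;> refine Finset.sum_congr rfl fun i _ => ?_ <;>
    rw [pderiv_neg_one_pow_mul, pderiv_comm']

lemma sum_swap_lt {m : ℕ} {A : Type*} [AddCommMonoid A] (G : Fin m → Fin m → A) :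
    ∑ k : Fin m, ∑ j ∈ Finset.univ.filter (k < ·), G k j
      = ∑ j : Fin m, ∑ k ∈ Finset.univ.filter (· < j), G k j := by
  simp only [Finset.sum_filter]
  exact Finset.sum_comm

/-- `d ∘ d = 0`. -/
lemma dRel_dRelLow {n : ℕ} (η : Fin (n + 1) → Fin (n + 1) → PolyR n) :
    dRel (dRelLow η) = 0 := by
  simp only [dRel, dRelLow, map_add, map_sum, pderiv_neg_one_pow_mul, mul_add,
    Finset.mul_sum]
  rw [Finset.sum_add_distrib]
  have h2 : ∑ k : Fin (n+1), ∑ j ∈ Finset.univ.filter (k < ·),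
      (-1 : PolyR n) ^ (k : ℕ) * ((-1 : PolyR n) ^ ((j : ℕ) - 1)
        * pderiv k.castSucc (pderiv j.castSucc (η k j)))
      = ∑ b : Fin (n+1), ∑ a ∈ Finset.univ.filter (· < b),
      (-1 : PolyR n) ^ (a : ℕ) * ((-1 : PolyR n) ^ ((b : ℕ) - 1)
        * pderiv a.castSucc (pderiv b.castSucc (η a b))) := sum_swap_lt _
  rw [h2, ← Finset.sum_add_distrib]
  refine Finset.sum_eq_zero fun b _ => ?_
  rw [← Finset.sum_add_distrib]
  refine Finset.sum_eq_zero fun a ha => ?_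
  have hab : a < b := by simpa using ha
  have hab' : (a : ℕ) < (b : ℕ) := hab
  have hb : 1 ≤ (b : ℕ) := by omega
  have hpow : (-1 : PolyR n) ^ (b : ℕ) = -(-1 : PolyR n) ^ ((b : ℕ) - 1) := by
    nth_rewrite 1 [show (b : ℕ) = ((b : ℕ) - 1) + 1 from (Nat.sub_add_cancel hb).symm]
    rw [pow_succ]; ring
  rw [pderiv_comm' b.castSucc a.castSucc, hpow]
  ring

/-- `∇` is well defined on `E_f`: if `ξ = d_{/}η` then the representative of
`∇([d_{/}ξ])` lies in `d_{/}f ∧ d_{/}Ω^{n−1}_{/}`, i.e. `∇([d_{/}ξ]) = 0` in `E_f`. -/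
theorem nabla_well_defined (n : ℕ) (f : PolyR n)
    (η : Fin (n + 1) → Fin (n + 1) → PolyR n) :
    nablaRep f (dRelLow η) ∈ dfWedgeDOmega f := by
  have h1 : nablaRep f (dRelLow η) = wedgeDf f (dRelLow (fun i j => dLam (η i j))) := by
    unfold nablaRep
    rw [dRel_dRelLow, mul_zero, sub_zero]
    unfold wedgeDf
    refine Finset.sum_congr rfl fun i _ => ?_
    show _ * dLam (dRelLow η i) = _
    rw [dLam_dRelLow]
  rw [h1]
  exact Submodule.subset_span ⟨_, rfl⟩
end
end

section
/- With E_f, ∇ as above, for every φ ∈ ℂ[λ] and ω ∈ E_f one has the Leibniz-type identity ∇(φ·ω) = (∂φ/∂λ)·b·ω + φ·∇(ω) in E_f; consequently b⁻¹∘∇, defined on b·Ẽ_f where Ẽ_f = E_f/(b-torsion), is a λ-connection commuting with a and b. -/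
noncomputable section
open MvPolynomial

private lemma pderiv_aeval_castSucc {n : ℕ} (j : Fin (n+1)) (p : Polynomial ℂ) :
    pderiv j.castSucc (Polynomial.aeval (X (Fin.last (n+1)) : PolyR n) p) = 0 := by
  induction p using Polynomial.induction_on with
  | C a => simp
  | add p q hp hq => simp [hp, hq]
  | monomial a k hk =>
    have hne : Fin.last (n+1) ≠ j.castSucc := (Fin.castSucc_lt_last j).ne'
    simp [pow_succ, ← mul_assoc, Pi.single_eq_of_ne hne]

private lemma pderiv_aeval_last {n : ℕ} (p : Polynomial ℂ) :
    pderiv (Fin.last (n+1)) (Polynomial.aeval (X (Fin.last (n+1)) : PolyR n) p)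
      = Polynomial.aeval (X (Fin.last (n+1)) : PolyR n) (Polynomial.derivative p) := by
  induction p using Polynomial.induction_on with
  | C a => simp
  | add p q hp hq => simp [hp, hq]
  | monomial a k hk =>
    simp only [map_mul, map_pow, Polynomial.aeval_C, Polynomial.aeval_X,
      Polynomial.derivative_mul, Polynomial.derivative_C, Polynomial.derivative_X_pow]
    rw [Derivation.leibniz, Derivation.leibniz_pow]
    simp only [pderiv_X_self, smul_eq_mul, mul_one, algebraMap_eq, pderiv_C, mul_zero,
      add_zero, map_mul, map_pow, map_natCast, Polynomial.aeval_X, Polynomial.aeval_C]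
    simp [nsmul_eq_mul]

/-- The Leibniz-type identity `∇(φ·ω) = (∂φ/∂λ)·b·ω + φ·∇(ω)` in `E_f`, for
`φ ∈ ℂ[λ]` and `ω = d_{/}ξ`: since `φ` does not depend on the `xᵢ`, a primitive
of `φ·d_{/}ξ` is `φ·ξ`, and `b[ω] = [d_{/}f ∧ ξ]`.  Consequently `b⁻¹∘∇`,
defined on `b·Ẽ_f` where `Ẽ_f = E_f/(b-torsion)`, is a `λ`-connection commuting
with `a` and `b`. -/
theorem nabla_leibniz (n : ℕ) (f : PolyR n) (phi : Polynomial ℂ)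
    (ξ : Fin (n + 1) → PolyR n) :
    Submodule.Quotient.mk (p := dfWedgeDOmega f)
        (nablaRep f (fun i => Polynomial.aeval (X (Fin.last (n + 1)) : PolyR n) phi * ξ i))
      = Submodule.Quotient.mk (p := dfWedgeDOmega f)
          (Polynomial.aeval (X (Fin.last (n + 1)) : PolyR n) (Polynomial.derivative phi)
              * wedgeDf f ξ
            + Polynomial.aeval (X (Fin.last (n + 1)) : PolyR n) phi * nablaRep f ξ) := by
  congr 1
  unfold nablaRep wedgeDf dRel dLam
  simp only [pderiv_mul, pderiv_aeval_castSucc, pderiv_aeval_last, zero_mul, zero_add,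
    Finset.mul_sum, mul_sub, ← Finset.sum_add_distrib, ← Finset.sum_sub_distrib]
  apply Finset.sum_congr rfl
  intro i _
  ring
end
end

section
/- The only singular point of the hypersurface {x^{2u} + y^{2v} + z^{2w} + λ·x^u y^v z^w = 0} ⊂ ℂ³ lying on the hypersurface itself is the origin, for every λ ∈ ℂ with λ² ≠ 4 (u, v, w positive integers). -/
/-- The only singular point of `{x^{2u} + y^{2v} + z^{2w} + λ·x^u y^v z^w = 0} ⊂ ℂ³`
lying on the hypersurface is the origin, for every `λ` with `λ² ≠ 4`
(`u, v, w ≥ 1`): if `f` and its three partial derivatives vanish at `(x,y,z)`,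
then `x = y = z = 0`. -/
theorem singular_point_origin (u v w : ℕ) (hu : 1 ≤ u) (hv : 1 ≤ v) (hw : 1 ≤ w)
    (lam : ℂ) (hlam : lam ^ 2 ≠ 4) (x y z : ℂ)
    (h0 : x ^ (2 * u) + y ^ (2 * v) + z ^ (2 * w) + lam * x ^ u * y ^ v * z ^ w = 0)
    (hx : 2 * (u : ℂ) * x ^ (2 * u - 1)
        + lam * (u : ℂ) * x ^ (u - 1) * y ^ v * z ^ w = 0)
    (hy : 2 * (v : ℂ) * y ^ (2 * v - 1)
        + lam * (v : ℂ) * x ^ u * y ^ (v - 1) * z ^ w = 0)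
    (hz : 2 * (w : ℂ) * z ^ (2 * w - 1)
        + lam * (w : ℂ) * x ^ u * y ^ v * z ^ (w - 1) = 0) :
    x = 0 ∧ y = 0 ∧ z = 0 := by
  have hu0 : (u : ℂ) ≠ 0 := Nat.cast_ne_zero.mpr (by omega)
  have hv0 : (v : ℂ) ≠ 0 := Nat.cast_ne_zero.mpr (by omega)
  have hw0 : (w : ℂ) ≠ 0 := Nat.cast_ne_zero.mpr (by omega)
  have hxe : x ^ (2 * u - 1) * x = x ^ (2 * u) := by rw [← pow_succ]; congr 1; omega
  have hxu : x ^ (u - 1) * x = x ^ u := by rw [← pow_succ]; congr 1; omega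
  have hye : y ^ (2 * v - 1) * y = y ^ (2 * v) := by rw [← pow_succ]; congr 1; omega
  have hyv : y ^ (v - 1) * y = y ^ v := by rw [← pow_succ]; congr 1; omega
  have hze : z ^ (2 * w - 1) * z = z ^ (2 * w) := by rw [← pow_succ]; congr 1; omega
  have hzw : z ^ (w - 1) * z = z ^ w := by rw [← pow_succ]; congr 1; omega
  have e1 : 2 * x ^ (2 * u) + lam * x ^ u * y ^ v * z ^ w = 0 := by
    have h : (u : ℂ) * (2 * x ^ (2 * u) + lam * x ^ u * y ^ v * z ^ w) = 0 := by
      rw [← hxe, ← hxu]; linear_combination x * hx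
    exact (mul_eq_zero.mp h).resolve_left hu0
  have e2 : 2 * y ^ (2 * v) + lam * x ^ u * y ^ v * z ^ w = 0 := by
    have h : (v : ℂ) * (2 * y ^ (2 * v) + lam * x ^ u * y ^ v * z ^ w) = 0 := by
      rw [← hye, ← hyv]; linear_combination y * hy
    exact (mul_eq_zero.mp h).resolve_left hv0
  have e3 : 2 * z ^ (2 * w) + lam * x ^ u * y ^ v * z ^ w = 0 := by
    have h : (w : ℂ) * (2 * z ^ (2 * w) + lam * x ^ u * y ^ v * z ^ w) = 0 := by
      rw [← hze, ← hzw]; linear_combination z * hz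
    exact (mul_eq_zero.mp h).resolve_left hw0
  have hP : lam * x ^ u * y ^ v * z ^ w = 0 := by
    linear_combination e1 + e2 + e3 - 2 * h0
  have hx2 : x ^ (2 * u) = 0 := by linear_combination (e1 - hP) / 2
  have hy2 : y ^ (2 * v) = 0 := by linear_combination (e2 - hP) / 2
  have hz2 : z ^ (2 * w) = 0 := by linear_combination (e3 - hP) / 2
  refine ⟨?_, ?_, ?_⟩
  · exact pow_eq_zero_iff (by omega) |>.mp hx2
  · exact pow_eq_zero_iff (by omega) |>.mp hy2
  · exact pow_eq_zero_iff (by omega) |>.mp hz2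
end
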